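/- arXiv:1210.4033 — 6 statements merged into one kernel-verified Lean document; each statement's English description precedes it below -/
import Mathlib

section
/- For any real constants c₁, c₂, the function Ĝ = c₁·G₁ + c₂·G₂ is differentiable on (A, ∞) and its derivative satisfies Ĝ'(r)/[(log r)^{1+ε} + (1+ε)·(log r)^{ε}] → c₃ as r → ∞, where c₃ = c₁ + c₂·α and α = lim_{r→∞} F(r); that is, Ĝ'(r) ∼ c₃·[(log r)^{1+ε} + (1+ε)·(log r)^{ε}] as r → ∞ when c₃ ≠ 0. -/
open Real Filter intervalIntegral

/-- For any real constants `c₁, c₂`, the function `Ĝ = c₁ G₁ + c₂ G₂` is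
differentiable on `(A, ∞)` and its derivative satisfies
`Ĝ' r / ((log r)^(1+ε) + (1+ε) (log r)^ε) → c₃` as `r → ∞`, where
`c₃ = c₁ + c₂ α` and `α = lim_{r→∞} F r`. -/
theorem stmt_5 (ε A : ℝ) (hε : 0 < ε) (hA : 1 < A)
    (G₁ : ℝ → ℝ) (hG₁ : ∀ r : ℝ, G₁ r = r * Real.log r ^ (1 + ε))
    (F : ℝ → ℝ)
    (hF : ∀ r : ℝ, A ≤ r → F r = ∫ s in A..r, 1 / (s ^ 2 * Real.log s ^ (2 + 2 * ε)))
    (G₂ : ℝ → ℝ) (hG₂ : ∀ r : ℝ, G₂ r = F r * G₁ r)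
    (α : ℝ) (hα : 0 < α) (hαlim : Tendsto F atTop (nhds α))
    (c₁ c₂ : ℝ) (Ghat : ℝ → ℝ) (hGhat : ∀ r : ℝ, Ghat r = c₁ * G₁ r + c₂ * G₂ r) :
    (∀ r : ℝ, A < r → DifferentiableAt ℝ Ghat r) ∧
      Tendsto
        (fun r : ℝ =>
          deriv Ghat r / (Real.log r ^ (1 + ε) + (1 + ε) * Real.log r ^ ε))
        atTop (nhds (c₁ + c₂ * α)) := by
  set D : ℝ → ℝ := fun r => Real.log r ^ (1 + ε) + (1 + ε) * Real.log r ^ ε with hDdef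
  set g : ℝ → ℝ := fun s => 1 / (s ^ 2 * Real.log s ^ (2 + 2 * ε)) with hgdef
  -- derivative of G₁
  have hG₁' : ∀ r : ℝ, 1 < r → HasDerivAt G₁ (D r) r := by
    intro r hr
    have hr0 : (0:ℝ) < r := lt_trans one_pos hr
    have hlogpos : 0 < Real.log r := Real.log_pos hr
    have hlog : HasDerivAt Real.log r⁻¹ r := Real.hasDerivAt_log hr0.ne'
    have h1 : HasDerivAt (fun x => Real.log x ^ (1 + ε))
        (r⁻¹ * (1 + ε) * Real.log r ^ (1 + ε - 1)) r :=
      hlog.rpow_const (Or.inl hlogpos.ne')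
    have h2 : HasDerivAt (fun x => x * Real.log x ^ (1 + ε))
        (1 * Real.log r ^ (1 + ε) + r * (r⁻¹ * (1 + ε) * Real.log r ^ (1 + ε - 1))) r :=
      (hasDerivAt_id' r).mul h1
    have heq : G₁ = fun x => x * Real.log x ^ (1 + ε) := funext hG₁
    rw [heq]
    convert h2 using 1
    have he : 1 + ε - 1 = ε := by ring
    rw [he, hDdef]
    field_simp
  -- continuity of the integrand on (1, ∞)
  have hcontg : ContinuousOn g (Set.Ioi (1:ℝ)) := by
    apply ContinuousOn.div continuousOn_const
    · exact ((continuous_pow 2).continuousOn).mul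
        ((Real.continuousOn_log.mono (by
            intro x hx
            simp only [Set.mem_compl_iff, Set.mem_singleton_iff]
            exact ne_of_gt (lt_trans one_pos hx))).rpow_const
          fun x hx => Or.inr (by positivity))
    · intro x hx
      have hx1 : (1:ℝ) < x := hx
      have hx0 : (0:ℝ) < x := lt_trans one_pos hx1
      have hlx : 0 < Real.log x := Real.log_pos hx1
      positivity
  -- derivative of F on (A, ∞)
  have hFint : ∀ r : ℝ, A < r → IntervalIntegrable g MeasureTheory.volume A r := by
    intro r hr
    apply (hcontg.mono _).intervalIntegrable
    intro x hx
    rw [Set.uIcc_of_le hr.le] at hx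
    exact lt_of_lt_of_le hA hx.1
  have hF' : ∀ r : ℝ, A < r → HasDerivAt F (g r) r := by
    intro r hr
    have hrA : (1:ℝ) < r := lt_trans hA hr
    have hderivInt : HasDerivAt (fun u => ∫ s in A..u, g s) (g r) r :=
      intervalIntegral.integral_hasDerivAt_right (hFint r hr)
        (hcontg.stronglyMeasurableAtFilter isOpen_Ioi r hrA)
        (hcontg.continuousAt (Ioi_mem_nhds hrA))
    apply hderivInt.congr_of_eventuallyEq
    filter_upwards [Ioi_mem_nhds hr] with x hx
    exact hF x (le_of_lt hx)
  -- derivative of Ghat on (A, ∞)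
  have hGhat' : ∀ r : ℝ, A < r →
      HasDerivAt Ghat (c₁ * D r + c₂ * (g r * G₁ r + F r * D r)) r := by
    intro r hr
    have hr1 : (1:ℝ) < r := lt_trans hA hr
    have h1 := hG₁' r hr1
    have h2 : HasDerivAt G₂ (g r * G₁ r + F r * D r) r := by
      have := (hF' r hr).mul h1
      have heq : G₂ = fun x => F x * G₁ x := funext hG₂
      rw [heq]; exact this
    have := (h1.const_mul c₁).add (h2.const_mul c₂)
    have heq : Ghat = fun x => c₁ * G₁ x + c₂ * G₂ x := funext hGhat
    rw [heq]; exact this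
  constructor
  · exact fun r hr => (hGhat' r hr).differentiableAt
  -- the limit
  have hDpos : ∀ r : ℝ, 1 < r → 0 < D r := by
    intro r hr
    have hlx : 0 < Real.log r := Real.log_pos hr
    have h1 : 0 < Real.log r ^ (1 + ε) := Real.rpow_pos_of_pos hlx _
    have h2 : 0 < Real.log r ^ ε := Real.rpow_pos_of_pos hlx _
    have : 0 < 1 + ε := by linarith
    positivity
  have hmain : Tendsto (fun r : ℝ => c₁ + c₂ * F r + c₂ * (g r * G₁ r / D r))
      atTop (nhds (c₁ + c₂ * α)) := by
    have hsmall : Tendsto (fun r : ℝ => g r * G₁ r / D r) atTop (nhds 0) := by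
      apply squeeze_zero' (g := fun r : ℝ => 1 / r)
      · filter_upwards [eventually_gt_atTop (1:ℝ)] with r hr
        have hr0 : (0:ℝ) < r := lt_trans one_pos hr
        have hlx : 0 < Real.log r := Real.log_pos hr
        have hg0 : 0 < g r := by
          have : 0 < Real.log r ^ (2 + 2*ε) := Real.rpow_pos_of_pos hlx _
          positivity
        have hG0 : 0 < G₁ r := by
          rw [hG₁ r]
          have : 0 < Real.log r ^ (1 + ε) := Real.rpow_pos_of_pos hlx _
          positivity
        positivity
      · filter_upwards [eventually_ge_atTop (Real.exp 1)] with r hr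
        have hr1 : (1:ℝ) < r := lt_of_lt_of_le (by
          calc (1:ℝ) < Real.exp 1 := by
                have := Real.exp_one_gt_d9; linarith
          ) hr
        have hr0 : (0:ℝ) < r := lt_trans one_pos hr1
        have hlx1 : 1 ≤ Real.log r := by
          rw [← Real.log_exp 1]
          exact Real.log_le_log (Real.exp_pos 1) hr
        have hlx0 : 0 < Real.log r := lt_of_lt_of_le one_pos hlx1
        -- g r * G₁ r = 1 / (r * log r ^ (1+ε))
        have hkey : g r * G₁ r = 1 / (r * Real.log r ^ (1 + ε)) := by
          rw [hgdef, hG₁ r]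
          have hsplit : Real.log r ^ (2 + 2*ε)
              = Real.log r ^ (1 + ε) * Real.log r ^ (1 + ε) := by
            rw [← Real.rpow_add hlx0]; ring_nf
          have hp : 0 < Real.log r ^ (1 + ε) := Real.rpow_pos_of_pos hlx0 _
          field_simp [hsplit]
          rw [sq, ← Real.rpow_add hlx0]; ring_nf
        rw [hkey]
        have hp1 : 1 ≤ Real.log r ^ (1 + ε) :=
          Real.one_le_rpow hlx1 (by linarith)
        have hpε : 0 < Real.log r ^ ε := Real.rpow_pos_of_pos hlx0 _
        have hD1 : 1 ≤ D r := by
          rw [hDdef]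
          have : 0 < (1 + ε) * Real.log r ^ ε := by positivity
          simp only
          linarith
        have hDpos' : 0 < D r := lt_of_lt_of_le one_pos hD1
        rw [div_div]
        apply div_le_div_of_nonneg_left one_pos.le hr0
        calc r = r * 1 * 1 := by ring
          _ ≤ r * Real.log r ^ (1 + ε) * D r := by
            apply mul_le_mul _ hD1 one_pos.le (by positivity)
            exact mul_le_mul_of_nonneg_left hp1 hr0.le
      · simpa using tendsto_inv_atTop_zero (𝕜 := ℝ)
    have h1 : Tendsto (fun r : ℝ => c₁ + c₂ * F r) atTop (nhds (c₁ + c₂ * α)) :=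
      tendsto_const_nhds.add (hαlim.const_mul c₂)
    have h2 := h1.add (hsmall.const_mul c₂)
    simpa using h2
  apply hmain.congr'
  filter_upwards [eventually_gt_atTop A] with r hr
  have hr1 : (1:ℝ) < r := lt_trans hA hr
  have hD0 : D r ≠ 0 := (hDpos r hr1).ne'
  rw [(hGhat' r hr).deriv]
  change _ = _ / D r
  field_simp
  ring
end

section
/- Let c₁, c₂ be real constants with c₃ = c₁ + c₂·α > 0, where α = lim_{r→∞} F(r), and set Ĝ = c₁·G₁ + c₂·G₂. Then there exists R₀ > A such that Ĝ(r) > 0 for all r ≥ R₀, and lim_{r→∞} (log r)·( r·Ĝ'(r)/Ĝ(r) − 1 ) = 1 + ε. In particular, Ĝ'(r)/Ĝ(r) = 1/r + (1+ε)/(r·log r) + o(1/(r·log r)) as r → ∞. -/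
open Real Filter intervalIntegral Asymptotics

/-- Let `c₃ = c₁ + c₂ α > 0` and `Ĝ = c₁ G₁ + c₂ G₂`. Then there exists
`R₀ > A` with `Ĝ r > 0` for all `r ≥ R₀`, and
`(log r) (r Ĝ' r / Ĝ r − 1) → 1 + ε` as `r → ∞`. In particular,
`Ĝ'/Ĝ = 1/r + (1+ε)/(r log r) + o(1/(r log r))` as `r → ∞`. -/
theorem stmt_6 (ε A : ℝ) (hε : 0 < ε) (hA : 1 < A)
    (G₁ : ℝ → ℝ) (hG₁ : ∀ r : ℝ, G₁ r = r * Real.log r ^ (1 + ε))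
    (F : ℝ → ℝ)
    (hF : ∀ r : ℝ, A ≤ r → F r = ∫ s in A..r, 1 / (s ^ 2 * Real.log s ^ (2 + 2 * ε)))
    (G₂ : ℝ → ℝ) (hG₂ : ∀ r : ℝ, G₂ r = F r * G₁ r)
    (α : ℝ) (hα : 0 < α) (hαlim : Tendsto F atTop (nhds α))
    (c₁ c₂ : ℝ) (hc₃ : 0 < c₁ + c₂ * α)
    (Ghat : ℝ → ℝ) (hGhat : ∀ r : ℝ, Ghat r = c₁ * G₁ r + c₂ * G₂ r) :
    (∃ R₀ : ℝ, A < R₀ ∧ ∀ r : ℝ, R₀ ≤ r → 0 < Ghat r) ∧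
      Tendsto (fun r : ℝ => Real.log r * (r * deriv Ghat r / Ghat r - 1))
        atTop (nhds (1 + ε)) ∧
      (fun r : ℝ =>
          deriv Ghat r / Ghat r - (1 / r + (1 + ε) / (r * Real.log r)))
        =o[atTop] fun r : ℝ => 1 / (r * Real.log r) := by
  have hGe : Ghat = fun r => c₁ * (r * Real.log r ^ (1 + ε)) +
      c₂ * (F r * (r * Real.log r ^ (1 + ε))) := by
    funext r; rw [hGhat r, hG₂ r, hG₁ r]
  set c₃ := c₁ + c₂ * α with hc₃def
  have hcF : Tendsto (fun r => c₁ + c₂ * F r) atTop (nhds c₃) := by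
    simpa using tendsto_const_nhds.add (hαlim.const_mul c₂)
  have hcFev : ∀ᶠ r in atTop, c₃ / 2 < c₁ + c₂ * F r :=
    hcF.eventually (eventually_gt_nhds (half_lt_self hc₃))
  set f : ℝ → ℝ := fun s => 1 / (s ^ 2 * Real.log s ^ (2 + 2 * ε)) with hfdef
  have hfc : ContinuousOn f (Set.Ioi (1 : ℝ)) := by
    intro s hs
    have hs1 : (1 : ℝ) < s := hs
    have hls : 0 < Real.log s := Real.log_pos hs1
    apply ContinuousWithinAt.div continuousWithinAt_const
    · exact (continuousWithinAt_id.pow 2).mul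
        ((Real.continuousAt_log (by positivity)).continuousWithinAt.rpow_const
          (Or.inl hls.ne'))
    · have : 0 < s ^ 2 * Real.log s ^ (2 + 2 * ε) := by positivity
      exact this.ne'
  -- derivative of Ghat for r > A
  have hD : ∀ r : ℝ, A < r →
      HasDerivAt Ghat (c₂ * f r * (r * Real.log r ^ (1 + ε)) +
        (c₁ + c₂ * F r) * (Real.log r ^ (1 + ε) + (1 + ε) * Real.log r ^ ε)) r := by
    intro r hr
    have hr1 : (1 : ℝ) < r := hA.trans hr
    have hr0 : (0 : ℝ) < r := lt_trans one_pos hr1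
    have hL : 0 < Real.log r := Real.log_pos hr1
    -- F has derivative f r at r
    have hFint : IntervalIntegrable f MeasureTheory.volume A r := by
      apply ContinuousOn.intervalIntegrable
      apply hfc.mono
      rw [Set.uIcc_of_le hr.le]
      intro s hs
      exact lt_of_lt_of_le hA hs.1
    have hFd0 : HasDerivAt (fun u => ∫ s in A..u, f s) (f r) r :=
      intervalIntegral.integral_hasDerivAt_right hFint
        (hfc.stronglyMeasurableAtFilter isOpen_Ioi r hr1)
        ((hfc.continuousAt (Ioi_mem_nhds hr1)))
    have hFd : HasDerivAt F (f r) r := by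
      apply hFd0.congr_of_eventuallyEq
      filter_upwards [Ioi_mem_nhds hr] with x hx
      exact hF x (le_of_lt hx)
    -- derivative of G₁
    have hpow : HasDerivAt (fun x : ℝ => Real.log x ^ (1 + ε))
        ((1 + ε) * Real.log r ^ ε * r⁻¹) r := by
      have h1 : HasDerivAt (fun y : ℝ => y ^ (1 + ε))
          ((1 + ε) * Real.log r ^ (1 + ε - 1)) (Real.log r) :=
        Real.hasDerivAt_rpow_const (Or.inl hL.ne')
      have := h1.comp r (Real.hasDerivAt_log hr0.ne')
      simpa [Function.comp_def, show (1 + ε - 1) = ε by ring] using this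
    have hG1d : HasDerivAt (fun x : ℝ => x * Real.log x ^ (1 + ε))
        (Real.log r ^ (1 + ε) + (1 + ε) * Real.log r ^ ε) r := by
      have := (hasDerivAt_id r).mul hpow
      exact this.congr_deriv (by simp only [id_eq, one_mul]; field_simp)
    have := ((hG1d.const_mul c₁).add ((hFd.mul hG1d).const_mul c₂))
    rw [hGe]
    exact this.congr_deriv (by ring)
  -- key eventual identity for the logarithmic derivative
  have hkey2 : (fun r : ℝ => Real.log r * (r * deriv Ghat r / Ghat r - 1)) =ᶠ[atTop]
      (fun r : ℝ => (1 + ε) + c₂ / ((c₁ + c₂ * F r) * (r * Real.log r ^ (1 + 2 * ε)))) := by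
    filter_upwards [eventually_gt_atTop A, hcFev] with r hr hcr
    have hr1 : (1 : ℝ) < r := hA.trans hr
    have hr0 : (0 : ℝ) < r := lt_trans one_pos hr1
    have hL : 0 < Real.log r := Real.log_pos hr1
    have hv : 0 < Real.log r ^ ε := Real.rpow_pos_of_pos hL ε
    have hc : (0 : ℝ) < c₁ + c₂ * F r := lt_trans (by positivity) hcr
    have hder := (hD r hr).deriv
    set L := Real.log r
    set v := L ^ ε with hvdef
    have e1 : L ^ (1 + ε) = L * v := by
      rw [Real.rpow_add hL, Real.rpow_one]
    have e2 : L ^ (2 + 2 * ε) = (L * v) * (L * v) := by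
      rw [show (2 + 2 * ε) = (1 + ε) + (1 + ε) by ring, Real.rpow_add hL, e1]
    have e3 : L ^ (1 + 2 * ε) = L * v * v := by
      rw [show (1 + 2 * ε) = (1 + ε) + ε by ring, Real.rpow_add hL, e1]
    rw [hder]
    simp only [hGe]
    simp only [hfdef]
    rw [show Real.log r = L from rfl]
    simp only [e1, e2, e3]
    have hG : c₁ * (r * (L * v)) + c₂ * (F r * (r * (L * v))) =
        (c₁ + c₂ * F r) * (r * (L * v)) := by ring
    rw [hG]
    field_simp
    ring
  -- limit of the right-hand side
  have hrL : Tendsto (fun r : ℝ => r * Real.log r ^ (1 + 2 * ε)) atTop atTop :=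
    tendsto_id.atTop_mul_atTop₀
      ((tendsto_rpow_atTop (by linarith)).comp Real.tendsto_log_atTop)
  have hden : Tendsto (fun r : ℝ => (c₁ + c₂ * F r) * (r * Real.log r ^ (1 + 2 * ε)))
      atTop atTop := hcF.pos_mul_atTop hc₃ hrL
  have hT2 : Tendsto (fun r : ℝ => Real.log r * (r * deriv Ghat r / Ghat r - 1))
      atTop (nhds (1 + ε)) := by
    have : Tendsto (fun r : ℝ => (1 + ε) + c₂ /
        ((c₁ + c₂ * F r) * (r * Real.log r ^ (1 + 2 * ε)))) atTop (nhds ((1 + ε) + 0)) :=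
      tendsto_const_nhds.add (tendsto_const_nhds.div_atTop hden)
    rw [add_zero] at this
    exact this.congr' hkey2.symm
  refine ⟨?_, hT2, ?_⟩
  · -- positivity
    obtain ⟨R, hR⟩ := eventually_atTop.mp hcFev
    refine ⟨max R (A + 1), lt_of_lt_of_le (by linarith) (le_max_right _ _), ?_⟩
    intro r hrr
    have hrR : R ≤ r := le_trans (le_max_left _ _) hrr
    have hr1 : (1 : ℝ) < r := by
      have := le_trans (le_max_right _ _) hrr; linarith
    have hL : 0 < Real.log r := Real.log_pos hr1
    have hc : (0 : ℝ) < c₁ + c₂ * F r := lt_trans (by positivity) (hR r hrR)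
    simp only [hGe]
    have : c₁ * (r * Real.log r ^ (1 + ε)) + c₂ * (F r * (r * Real.log r ^ (1 + ε))) =
        (c₁ + c₂ * F r) * (r * Real.log r ^ (1 + ε)) := by ring
    rw [this]
    have : 0 < Real.log r ^ (1 + ε) := Real.rpow_pos_of_pos hL _
    positivity
  · -- little-o
    rw [Asymptotics.isLittleO_iff_tendsto']
    · have h0 : Tendsto (fun r : ℝ => Real.log r * (r * deriv Ghat r / Ghat r - 1) - (1 + ε))
          atTop (nhds 0) := by
        simpa using hT2.sub (tendsto_const_nhds (x := (1 + ε)))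
      apply h0.congr'
      filter_upwards [eventually_gt_atTop (1 : ℝ)] with r hr1
      have hr0 : (0 : ℝ) < r := lt_trans one_pos hr1
      have hL : 0 < Real.log r := Real.log_pos hr1
      field_simp
      ring
    · filter_upwards [eventually_gt_atTop (1 : ℝ)] with r hr1 h
      exfalso
      have hr0 : (0 : ℝ) < r := lt_trans one_pos hr1
      have hL : 0 < Real.log r := Real.log_pos hr1
      have : (0:ℝ) < 1 / (r * Real.log r) := by positivity
      rw [h] at this
      exact lt_irrefl _ this
end

section
/- Let c₁, c₂ be real constants with c₃ = c₁ + c₂·α > 0, where α = lim_{r→∞} F(r), and set Ĝ = c₁·G₁ + c₂·G₂. Then there exists B > A such that for all r ≥ B, Ĝ(r) > 0 and Ĝ'(r)/Ĝ(r) > (3/4)·(1/r)·(1 + (1/2+ε)/(log r)). -/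
open Real Filter intervalIntegral

set_option maxHeartbeats 1000000 in
/-- Let `c₃ = c₁ + c₂ α > 0`, where `α = lim_{r→∞} F r`, and set
`Ĝ = c₁ G₁ + c₂ G₂`. Then there exists `B > A` such that for all `r ≥ B`,
`Ĝ r > 0` and `Ĝ' r / Ĝ r > (3/4) (1/r) (1 + (1/2+ε)/log r)`. -/
theorem stmt_10 (ε A : ℝ) (hε : 0 < ε) (hA : 1 < A)
    (G₁ : ℝ → ℝ) (hG₁ : ∀ r : ℝ, G₁ r = r * Real.log r ^ (1 / 2 + ε))
    (F : ℝ → ℝ)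
    (hF : ∀ r : ℝ, A ≤ r → F r = ∫ s in A..r, 1 / (s ^ 2 * Real.log s ^ (1 + 2 * ε)))
    (G₂ : ℝ → ℝ) (hG₂ : ∀ r : ℝ, G₂ r = F r * G₁ r)
    (α : ℝ) (hα : 0 < α) (hαlim : Tendsto F atTop (nhds α))
    (c₁ c₂ : ℝ) (hc₃ : 0 < c₁ + c₂ * α)
    (Ghat : ℝ → ℝ) (hGhat : ∀ r : ℝ, Ghat r = c₁ * G₁ r + c₂ * G₂ r) :
    ∃ B : ℝ, A < B ∧ ∀ r : ℝ, B ≤ r →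
      0 < Ghat r ∧
        deriv Ghat r / Ghat r
          > 3 / 4 * (1 / r) * (1 + (1 / 2 + ε) / Real.log r) := by
  set p : ℝ := 1 / 2 + ε with hp
  set c₃ : ℝ := c₁ + c₂ * α with hc3def
  set f : ℝ → ℝ := fun s => 1 / (s ^ 2 * Real.log s ^ (1 + 2 * ε)) with hfdef
  have hp0 : 0 < p := by rw [hp]; linarith
  -- continuity of f on (1, ∞)
  have hfcont : ∀ x : ℝ, 1 < x → ContinuousAt f x := by
    intro x hx
    have hx0 : (0:ℝ) < x := by linarith
    have hlx : 0 < Real.log x := Real.log_pos hx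
    have hden : ContinuousAt (fun s : ℝ => s ^ 2 * Real.log s ^ (1 + 2 * ε)) x := by
      exact (continuousAt_id.pow 2).mul
        (((Real.continuousAt_log hx0.ne').rpow_const (Or.inl hlx.ne')))
    have hdne : x ^ 2 * Real.log x ^ (1 + 2 * ε) ≠ 0 := by
      positivity
    exact continuousAt_const.div hden hdne
  -- eventual lower bound on c₁ + c₂ * F r
  have hHlim : Tendsto (fun r => c₁ + c₂ * F r) atTop (nhds c₃) :=
    tendsto_const_nhds.add (hαlim.const_mul c₂)
  have hev : ∀ᶠ r in atTop, c₃ / 2 < c₁ + c₂ * F r :=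
    hHlim.eventually (eventually_gt_nhds (by linarith))
  obtain ⟨B₀, hB₀⟩ := eventually_atTop.mp hev
  refine ⟨max (max (A + 1) (Real.exp 1)) (max B₀ (8 * |c₂| / c₃ + 1)), ?_, ?_⟩
  · calc A < A + 1 := by linarith
      _ ≤ _ := le_trans (le_max_left _ _) (le_max_left _ _)
  intro r hr
  have hrA : A < r := by
    have := le_trans (le_trans (le_max_left _ _) (le_max_left _ _)) hr
    linarith
  have hr1 : 1 < r := lt_trans hA hrA
  have hr0 : (0:ℝ) < r := by linarith
  have hre : Real.exp 1 ≤ r :=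
    le_trans (le_trans (le_max_right _ _) (le_max_left _ _)) hr
  have hL1 : 1 ≤ Real.log r := by
    have := Real.log_le_log (Real.exp_pos 1) hre
    rwa [Real.log_exp] at this
  have hL0 : 0 < Real.log r := by linarith
  have hrB₀ : B₀ ≤ r := le_trans (le_trans (le_max_left _ _) (le_max_right _ _)) hr
  have hrc : 8 * |c₂| / c₃ < r := by
    have := le_trans (le_trans (le_max_right _ _) (le_max_right _ _)) hr
    linarith
  have hc3 : 0 < c₃ := hc₃
  have hH : c₃ / 2 < c₁ + c₂ * F r := hB₀ r hrB₀
  set L : ℝ := Real.log r with hLdef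
  set H : ℝ := c₁ + c₂ * F r with hHdef
  have hHpos : 0 < H := by rw [hHdef]; linarith
  -- derivative of F
  have hFd : HasDerivAt F (f r) r := by
    have hint : IntervalIntegrable f MeasureTheory.volume A r := by
      apply ContinuousOn.intervalIntegrable
      intro s hs
      have hs1 : 1 < s := by
        rcases Set.mem_uIcc.mp hs with h | h
        · linarith [h.1]
        · linarith [h.1]
      exact (hfcont s hs1).continuousWithinAt
    have hmeas : StronglyMeasurableAtFilter f (nhds r) MeasureTheory.volume := by
      refine ContinuousOn.stronglyMeasurableAtFilter (s := Set.Ioi (1:ℝ))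
        isOpen_Ioi ?_ r hr1
      intro x hx
      exact (hfcont x hx).continuousWithinAt
    have hI : HasDerivAt (fun u => ∫ s in A..u, f s) (f r) r :=
      intervalIntegral.integral_hasDerivAt_right hint hmeas (hfcont r hr1)
    refine hI.congr_of_eventuallyEq ?_
    filter_upwards [eventually_gt_nhds hrA] with x hx
    exact hF x hx.le
  -- derivative of G₁
  have hlogp : HasDerivAt (fun x : ℝ => Real.log x ^ p) (r⁻¹ * p * L ^ (p - 1)) r :=
    (Real.hasDerivAt_log hr0.ne').rpow_const (Or.inl hL0.ne')
  have hG₁d : HasDerivAt G₁ (1 * L ^ p + r * (r⁻¹ * p * L ^ (p - 1))) r := by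
    have : HasDerivAt (fun x : ℝ => x * Real.log x ^ p)
        (1 * L ^ p + r * (r⁻¹ * p * L ^ (p - 1))) r :=
      (hasDerivAt_id r).mul hlogp
    refine this.congr_of_eventuallyEq ?_
    filter_upwards with x using hG₁ x
  -- derivative of Ghat
  have hGhat' : Ghat = fun x => (c₁ + c₂ * F x) * G₁ x := by
    funext x; rw [hGhat x, hG₂ x]; ring
  have hHd : HasDerivAt (fun x => c₁ + c₂ * F x) (c₂ * f r) r :=
    ((hFd.const_mul c₂).const_add c₁)
  have hGd : HasDerivAt Ghat
      (c₂ * f r * G₁ r + H * (1 * L ^ p + r * (r⁻¹ * p * L ^ (p - 1)))) r := by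
    rw [hGhat']
    exact hHd.mul hG₁d
  have hderiv : deriv Ghat r
      = c₂ * f r * G₁ r + H * (1 * L ^ p + r * (r⁻¹ * p * L ^ (p - 1))) :=
    hGd.deriv
  -- positivity facts
  have hLp : 0 < L ^ p := Real.rpow_pos_of_pos hL0 p
  have hG₁pos : 0 < G₁ r := by rw [hG₁ r]; exact mul_pos hr0 hLp
  have hGhatr : Ghat r = H * (r * L ^ p) := by
    rw [hGhat r, hG₂ r, hG₁ r, hHdef]; ring
  have hGhatpos : 0 < Ghat r := by
    rw [hGhatr]; exact mul_pos hHpos (mul_pos hr0 hLp)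
  refine ⟨hGhatpos, ?_⟩
  -- rewrite L^(p-1)
  have hLpm : L ^ (p - 1) = L ^ p / L := by
    rw [Real.rpow_sub hL0, Real.rpow_one]
  -- f bounds
  have hfpos : 0 < f r := by
    rw [hfdef]
    have : (0:ℝ) < r ^ 2 * L ^ (1 + 2 * ε) := by positivity
    positivity
  have hfle : f r ≤ 1 / r ^ 2 := by
    rw [hfdef]
    simp only
    apply div_le_div_of_nonneg_left (by norm_num) (by positivity)
    have h1 : (1:ℝ) ≤ L ^ (1 + 2 * ε) :=
      Real.one_le_rpow hL1 (by linarith)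
    nlinarith [sq_nonneg r, hr0]
  -- key inequality: -(c₂ * f r) < (1/4) * H * (1/r)
  have hkey : -(c₂ * f r) < 1 / 4 * H * (1 / r) := by
    have h1 : -(c₂ * f r) ≤ |c₂| * f r := by
      have habs : |c₂ * f r| = |c₂| * f r := by
        rw [abs_mul, abs_of_pos hfpos]
      calc -(c₂ * f r) ≤ |c₂ * f r| := neg_le_abs _
        _ = |c₂| * f r := habs
    have h2 : |c₂| * f r ≤ |c₂| / r ^ 2 := by
      rw [div_eq_mul_one_div]
      exact mul_le_mul_of_nonneg_left (by simpa using hfle) (abs_nonneg c₂)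
    have h3 : |c₂| / r ^ 2 < c₃ / (8 * r) := by
      rw [div_lt_div_iff₀ (by positivity) (by positivity)]
      have h8 : 8 * |c₂| < c₃ * r := by
        have h9 := (div_lt_iff₀ hc3).mp hrc
        linarith
      calc |c₂| * (8 * r) = (8 * |c₂|) * r := by ring
        _ < (c₃ * r) * r := mul_lt_mul_of_pos_right h8 hr0
        _ = c₃ * r ^ 2 := by ring
    have h4 : c₃ / (8 * r) ≤ 1 / 4 * H * (1 / r) := by
      rw [div_le_iff₀ (by positivity : (0:ℝ) < 8 * r)]
      have he : 1 / 4 * H * (1 / r) * (8 * r) = 2 * H := by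
        field_simp; ring
      rw [he]; linarith
    linarith
  -- final computation
  have hkey' : -(c₂ * f r * r) < 1 / 4 * H := by
    have := mul_lt_mul_of_pos_right hkey hr0
    have hrr : 1 / 4 * H * (1 / r) * r = 1 / 4 * H := by
      field_simp
    rw [hrr] at this
    linarith
  rw [gt_iff_lt, lt_div_iff₀ hGhatpos, hderiv, hGhatr, hG₁ r, hLpm]
  have hexp : c₂ * f r * (r * L ^ p) + H * (1 * L ^ p + r * (r⁻¹ * p * (L ^ p / L)))
      = (c₂ * f r * r) * L ^ p + H * L ^ p + H * p * (L ^ p / L) := by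
    field_simp
    ring
  have hlhs : 3 / 4 * (1 / r) * (1 + p / L) * (H * (r * L ^ p))
      = 3 / 4 * H * L ^ p + 3 / 4 * H * p * (L ^ p / L) := by
    field_simp
  rw [hexp, hlhs]
  have hpos : 0 < H * p * (L ^ p / L) := by positivity
  have hmul := mul_lt_mul_of_pos_right hkey' hLp
  linarith [hmul, hpos]
end

section
/- Let c₁, c₂ be real constants with c₃ = c₁ + c₂·α > 0, where α = lim_{r→∞} F(r), and set Ǧ = c₁·G₁ + c₂·G₂. Then there exists B > A such that for all r ≥ B, Ǧ(r) > 0 and Ǧ'(r)/Ǧ(r) ≤ (5/4)·(1/r)·[1 + 1/(2·log r) + 1/(2·log r·(log log r))]. -/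
open Real Filter intervalIntegral

set_option maxHeartbeats 1600000 in
/-- Let `c₃ = c₁ + c₂ α > 0`, where `α = lim_{r→∞} F r`, and set
`Ǧ = c₁ G₁ + c₂ G₂`. Then there exists `B > A` such that for all `r ≥ B`,
`Ǧ r > 0` and `Ǧ' r / Ǧ r ≤ (5/4) (1/r) [1 + 1/(2 log r) + 1/(2 log r log log r)]`. -/
theorem stmt_13 (A : ℝ) (hA : Real.exp 1 < A)
    (G₁ : ℝ → ℝ)
    (hG₁ : ∀ r : ℝ,
      G₁ r = r * Real.log r ^ ((1 : ℝ) / 2) * Real.log (Real.log r) ^ ((1 : ℝ) / 2))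
    (F : ℝ → ℝ)
    (hF : ∀ r : ℝ, A ≤ r →
      F r = ∫ s in A..r, 1 / (s ^ 2 * Real.log s * Real.log (Real.log s)))
    (G₂ : ℝ → ℝ) (hG₂ : ∀ r : ℝ, G₂ r = F r * G₁ r)
    (α : ℝ) (hα : 0 < α) (hαlim : Tendsto F atTop (nhds α))
    (c₁ c₂ : ℝ) (hc₃ : 0 < c₁ + c₂ * α)
    (Gcheck : ℝ → ℝ) (hGcheck : ∀ r : ℝ, Gcheck r = c₁ * G₁ r + c₂ * G₂ r) :
    ∃ B : ℝ, A < B ∧ ∀ r : ℝ, B ≤ r →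
      0 < Gcheck r ∧
        deriv Gcheck r / Gcheck r
          ≤ 5 / 4 * (1 / r) *
              (1 + 1 / (2 * Real.log r) +
                1 / (2 * Real.log r * Real.log (Real.log r))) := by
  have hGeq : Gcheck = fun x : ℝ => (c₁ + c₂ * F x) *
      (x * Real.log x ^ ((1 : ℝ) / 2) * Real.log (Real.log x) ^ ((1 : ℝ) / 2)) := by
    funext x; rw [hGcheck, hG₂, hG₁]; ring
  rw [hGeq]
  set c₃ := c₁ + c₂ * α with hc3def
  have h1e : (1 : ℝ) < Real.exp 1 := by
    have := Real.add_one_le_exp (1 : ℝ); linarith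
  have hlim : Tendsto (fun r => c₁ + c₂ * F r) atTop (nhds c₃) := by
    have := (hαlim.const_mul c₂).const_add c₁
    simpa [hc3def] using this
  have hev : ∀ᶠ r in atTop, c₃ / 2 < c₁ + c₂ * F r :=
    hlim.eventually (eventually_gt_nhds (by linarith))
  obtain ⟨R₀, hR₀⟩ := eventually_atTop.mp hev
  refine ⟨max (max (A + 1) (Real.exp (Real.exp 1) + 1)) (max R₀ (8 * |c₂| / c₃ + 1)),
    ?_, ?_⟩
  · have : A + 1 ≤ max (max (A + 1) (Real.exp (Real.exp 1) + 1)) (max R₀ (8 * |c₂| / c₃ + 1)) :=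
      le_max_of_le_left (le_max_left _ _)
    linarith
  intro r hr
  have h1 : A + 1 ≤ r := le_trans (le_max_of_le_left (le_max_left _ _)) hr
  have h2 : Real.exp (Real.exp 1) + 1 ≤ r := le_trans (le_max_of_le_left (le_max_right _ _)) hr
  have h3 : R₀ ≤ r := le_trans (le_max_of_le_right (le_max_left _ _)) hr
  have h4 : 8 * |c₂| / c₃ + 1 ≤ r := le_trans (le_max_of_le_right (le_max_right _ _)) hr
  have hrA : A < r := by linarith
  have hr0 : 0 < r := lt_trans (lt_trans (Real.exp_pos 1) hA) hrA
  have hre : Real.exp (Real.exp 1) < r := by linarith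
  have hL : Real.exp 1 < Real.log r := by
    have := Real.log_lt_log (Real.exp_pos _) hre
    rwa [Real.log_exp] at this
  have hL1 : 1 < Real.log r := lt_trans h1e hL
  have hL0 : 0 < Real.log r := by linarith
  have hLL1 : 1 < Real.log (Real.log r) := by
    have := Real.log_lt_log (Real.exp_pos 1) hL
    rwa [Real.log_exp] at this
  have hLL0 : 0 < Real.log (Real.log r) := by linarith
  have hP : c₃ / 2 < c₁ + c₂ * F r := hR₀ r h3
  have hPpos : 0 < c₁ + c₂ * F r := by linarith
  have hsL : 0 < Real.log r ^ ((1 : ℝ) / 2) := Real.rpow_pos_of_pos hL0 _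
  have hsLL : 0 < Real.log (Real.log r) ^ ((1 : ℝ) / 2) := Real.rpow_pos_of_pos hLL0 _
  have hG : 0 < r * Real.log r ^ ((1 : ℝ) / 2) * Real.log (Real.log r) ^ ((1 : ℝ) / 2) := by
    positivity
  have hGcheckpos : 0 < (c₁ + c₂ * F r) *
      (r * Real.log r ^ ((1 : ℝ) / 2) * Real.log (Real.log r) ^ ((1 : ℝ) / 2)) :=
    mul_pos hPpos hG
  refine ⟨hGcheckpos, ?_⟩
  -- derivative of G₁
  have hlogd : HasDerivAt Real.log r⁻¹ r := Real.hasDerivAt_log hr0.ne'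
  have hsLd : HasDerivAt (fun x => Real.log x ^ ((1 : ℝ) / 2))
      (r⁻¹ * ((1 : ℝ) / 2) * Real.log r ^ ((1 : ℝ) / 2 - 1)) r :=
    hlogd.rpow_const (Or.inl hL0.ne')
  have hlld : HasDerivAt (fun x => Real.log (Real.log x)) ((Real.log r)⁻¹ * r⁻¹) r :=
    (Real.hasDerivAt_log hL0.ne').comp r hlogd
  have hsLLd : HasDerivAt (fun x => Real.log (Real.log x) ^ ((1 : ℝ) / 2))
      ((Real.log r)⁻¹ * r⁻¹ * ((1 : ℝ) / 2) * Real.log (Real.log r) ^ ((1 : ℝ) / 2 - 1)) r :=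
    hlld.rpow_const (Or.inl hLL0.ne')
  have hG1d : HasDerivAt
      (fun x => x * Real.log x ^ ((1 : ℝ) / 2) * Real.log (Real.log x) ^ ((1 : ℝ) / 2))
      ((1 * Real.log r ^ ((1 : ℝ) / 2) +
          r * (r⁻¹ * ((1 : ℝ) / 2) * Real.log r ^ ((1 : ℝ) / 2 - 1))) *
          Real.log (Real.log r) ^ ((1 : ℝ) / 2) +
        r * Real.log r ^ ((1 : ℝ) / 2) *
          ((Real.log r)⁻¹ * r⁻¹ * ((1 : ℝ) / 2) * Real.log (Real.log r) ^ ((1 : ℝ) / 2 - 1))) r :=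
    ((hasDerivAt_id' r).mul hsLd).mul hsLLd
  have hX : HasDerivAt
      (fun x => x * Real.log x ^ ((1 : ℝ) / 2) * Real.log (Real.log x) ^ ((1 : ℝ) / 2))
      (r * Real.log r ^ ((1 : ℝ) / 2) * Real.log (Real.log r) ^ ((1 : ℝ) / 2) *
        (1 / r * (1 + 1 / (2 * Real.log r) +
          1 / (2 * Real.log r * Real.log (Real.log r))))) r := by
    convert hG1d using 1
    rw [Real.rpow_sub hL0, Real.rpow_sub hLL0, Real.rpow_one, Real.rpow_one]
    field_simp
  -- derivative of F
  have hfc : ContinuousOn (fun s : ℝ => 1 / (s ^ 2 * Real.log s * Real.log (Real.log s)))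
      (Set.Ioi (Real.exp 1)) := by
    intro s hs
    have hs1 : Real.exp 1 < s := hs
    have hs0 : 0 < s := (Real.exp_pos 1).trans hs1
    have hls : 1 < Real.log s := by
      have := Real.log_lt_log (Real.exp_pos 1) hs1
      rwa [Real.log_exp] at this
    have hls0 : 0 < Real.log s := by linarith
    have hlls : 0 < Real.log (Real.log s) := Real.log_pos hls
    have hd : ContinuousAt (fun s : ℝ => s ^ 2 * Real.log s * Real.log (Real.log s)) s := by
      have hc1 : ContinuousAt (fun s : ℝ => Real.log (Real.log s)) s :=
        ContinuousAt.comp (Real.continuousAt_log hls0.ne') (Real.continuousAt_log hs0.ne')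
      exact ((continuousAt_id.pow 2).mul (Real.continuousAt_log hs0.ne')).mul hc1
    exact (continuousAt_const.div hd (by positivity)).continuousWithinAt
  have hsub : Set.uIcc A r ⊆ Set.Ioi (Real.exp 1) := by
    rw [Set.uIcc_of_le hrA.le]
    intro x hx
    exact lt_of_lt_of_le hA hx.1
  have hint : IntervalIntegrable
      (fun s : ℝ => 1 / (s ^ 2 * Real.log s * Real.log (Real.log s))) MeasureTheory.volume A r :=
    (hfc.mono hsub).intervalIntegrable
  have hrmem : r ∈ Set.Ioi (Real.exp 1) := lt_trans hA hrA
  have hmeas : StronglyMeasurableAtFilter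
      (fun s : ℝ => 1 / (s ^ 2 * Real.log s * Real.log (Real.log s))) (nhds r)
      MeasureTheory.volume :=
    hfc.stronglyMeasurableAtFilter isOpen_Ioi r hrmem
  have hcont : ContinuousAt (fun s : ℝ => 1 / (s ^ 2 * Real.log s * Real.log (Real.log s))) r :=
    hfc.continuousAt (Ioi_mem_nhds hrmem)
  have hFTC := intervalIntegral.integral_hasDerivAt_right hint hmeas hcont
  have hFd : HasDerivAt F (1 / (r ^ 2 * Real.log r * Real.log (Real.log r))) r := by
    refine HasDerivAt.congr_of_eventuallyEq hFTC ?_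
    filter_upwards [Ioi_mem_nhds hrA] with s hs
    exact hF s (le_of_lt hs)
  have hPd : HasDerivAt (fun x => c₁ + c₂ * F x)
      (c₂ * (1 / (r ^ 2 * Real.log r * Real.log (Real.log r)))) r := by
    exact (hFd.const_mul c₂).const_add c₁
  have hGd : HasDerivAt (fun x : ℝ => (c₁ + c₂ * F x) *
      (x * Real.log x ^ ((1 : ℝ) / 2) * Real.log (Real.log x) ^ ((1 : ℝ) / 2)))
      (c₂ * (1 / (r ^ 2 * Real.log r * Real.log (Real.log r))) *
          (r * Real.log r ^ ((1 : ℝ) / 2) * Real.log (Real.log r) ^ ((1 : ℝ) / 2)) +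
        (c₁ + c₂ * F r) *
          (r * Real.log r ^ ((1 : ℝ) / 2) * Real.log (Real.log r) ^ ((1 : ℝ) / 2) *
            (1 / r * (1 + 1 / (2 * Real.log r) +
              1 / (2 * Real.log r * Real.log (Real.log r)))))) r := hPd.mul hX
  rw [hGd.deriv, div_le_iff₀ hGcheckpos]
  clear hGd hX hG1d hFTC hfc hint hmeas hcont hFd hPd hlld hsLd hsLLd hlogd hlim hev hR₀ hαlim hF hGcheck hG₂ hG₁ hGeq hsub hrmem hr
  set L := Real.log r with hLdef
  set LL := Real.log L with hLLdef
  set sL := L ^ ((1 : ℝ) / 2) with hsLdef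
  set sLL := LL ^ ((1 : ℝ) / 2) with hsLLdef
  set P := c₁ + c₂ * F r with hPdef
  set E := 1 + 1 / (2 * L) + 1 / (2 * L * LL) with hEdef
  have hE1 : 1 ≤ E := by
    have e1 : 0 < 1 / (2 * L) := by positivity
    have e2 : 0 < 1 / (2 * L * LL) := by positivity
    simp only [hEdef]; linarith
  have h8 : 8 * c₂ ≤ c₃ * r := by
    have hd : 8 * |c₂| / c₃ ≤ r := by linarith
    have := (div_le_iff₀ hc₃).mp hd
    have habs := le_abs_self c₂
    linarith
  clear_value c₃ L LL sL sLL P E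
  have hkey : c₂ * (1 / (r ^ 2 * L * LL)) ≤ 1 / 4 * (1 / r * E) * P := by
    rw [mul_one_div, show 1 / 4 * (1 / r * E) * P = E * P / (4 * r) by ring,
      div_le_div_iff₀ (mul_pos (mul_pos (pow_pos hr0 2) hL0) hLL0) (by linarith)]
    -- goal : c₂ * (4 * r) ≤ E * P * (r ^ 2 * L * LL)
    have i0a : 4 * c₂ ≤ P * r := by
      have := mul_lt_mul_of_pos_right hP hr0; linarith
    have i0 : 4 * c₂ * r ≤ P * r ^ 2 := by
      have := mul_le_mul_of_nonneg_right i0a hr0.le; nlinarith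
    have hLL01 : (1 : ℝ) ≤ L * LL := by nlinarith
    have i1 : P * r ^ 2 ≤ P * r ^ 2 * (L * LL) :=
      le_mul_of_one_le_right (mul_pos hPpos (pow_pos hr0 2)).le hLL01
    have i2 : P * r ^ 2 * (L * LL) ≤ E * (P * r ^ 2 * (L * LL)) :=
      le_mul_of_one_le_left (mul_pos (mul_pos hPpos (pow_pos hr0 2)) (mul_pos hL0 hLL0)).le hE1
    linarith
  have hkey2 := mul_le_mul_of_nonneg_right hkey hG.le
  linarith [hkey2]
end

section
/- Let ε > 0 be real, let r > 1 be real, let φ be real, and let v be a real number satisfying v ≥ (1 + sin²φ)·(1/(2r) + (1+ε)/(2·r·log r)). Then (ε/(r·(log r)^{1+ε}))·[ (cos²φ/(2r))·((1+ε)/(log r) + 1) − v ] ≤ (ε/(2·r²·(log r)^{1+ε}))·(1 + (1+ε)/(log r))·(cos²φ − sin²φ − 1) ≤ 0. -/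
open Real

/-- Key drift computation for the `n = 2` case of Theorem 3.1: if
`v ≥ (1 + sin²φ) (1/(2r) + (1+ε)/(2 r log r))` then
`(ε/(r (log r)^(1+ε))) [(cos²φ/(2r)) ((1+ε)/log r + 1) − v]
  ≤ (ε/(2 r² (log r)^(1+ε))) (1 + (1+ε)/log r) (cos²φ − sin²φ − 1) ≤ 0`. -/
theorem stmt_14 (ε r φ v : ℝ) (hε : 0 < ε) (hr : 1 < r)
    (hv : v ≥ (1 + Real.sin φ ^ 2) * (1 / (2 * r) + (1 + ε) / (2 * r * Real.log r))) :
    (ε / (r * Real.log r ^ (1 + ε))) *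
        (Real.cos φ ^ 2 / (2 * r) * ((1 + ε) / Real.log r + 1) - v)
      ≤ (ε / (2 * r ^ 2 * Real.log r ^ (1 + ε))) * (1 + (1 + ε) / Real.log r) *
          (Real.cos φ ^ 2 - Real.sin φ ^ 2 - 1) ∧
    (ε / (2 * r ^ 2 * Real.log r ^ (1 + ε))) * (1 + (1 + ε) / Real.log r) *
        (Real.cos φ ^ 2 - Real.sin φ ^ 2 - 1) ≤ 0 := by
  have hr0 : (0:ℝ) < r := lt_trans one_pos hr
  have hL : 0 < Real.log r := Real.log_pos hr
  have hP : 0 < Real.log r ^ (1 + ε) := Real.rpow_pos_of_pos hL _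
  have hc : (0:ℝ) ≤ ε / (r * Real.log r ^ (1 + ε)) :=
    le_of_lt (div_pos hε (mul_pos hr0 hP))
  constructor
  · have h1 : Real.cos φ ^ 2 / (2 * r) * ((1 + ε) / Real.log r + 1) - v
        ≤ Real.cos φ ^ 2 / (2 * r) * ((1 + ε) / Real.log r + 1)
          - (1 + Real.sin φ ^ 2) * (1 / (2 * r) + (1 + ε) / (2 * r * Real.log r)) := by
      linarith
    have h2 := mul_le_mul_of_nonneg_left h1 hc
    refine h2.trans (le_of_eq ?_)
    field_simp
    ring
  · have h3 : Real.cos φ ^ 2 - Real.sin φ ^ 2 - 1 ≤ 0 := by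
      nlinarith [Real.sin_sq_add_cos_sq φ, sq_nonneg (Real.sin φ)]
    have h4 : 0 ≤ (ε / (2 * r ^ 2 * Real.log r ^ (1 + ε))) * (1 + (1 + ε) / Real.log r) := by
      positivity
    exact mul_nonpos_of_nonneg_of_nonpos h4 h3
end

section
/- For every real a > 0 there exists a real B > 0 such that for all real r ≥ B, all real φ, and all real v satisfying v ≥ (1 + sin²φ)·(a/2)·(cosh(a·r)/sinh(a·r)), one has v/r² − cos²φ/r³ > 1/(sinh(a·r))². -/
open Real

set_option maxHeartbeats 1000000

/-- Key drift computation in the proof of the first part of Theorem 5.1: for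
every `a > 0` there exists `B > 0` such that for all `r ≥ B`, all `φ`, and all
`v ≥ (1 + sin²φ) (a/2) (cosh (a r)/sinh (a r))`, one has
`v/r² − cos²φ/r³ > 1/(sinh (a r))²`. -/
theorem stmt_17 (a : ℝ) (ha : 0 < a) :
    ∃ B : ℝ, 0 < B ∧ ∀ r : ℝ, B ≤ r → ∀ φ v : ℝ,
      v ≥ (1 + Real.sin φ ^ 2) * (a / 2) * (Real.cosh (a * r) / Real.sinh (a * r)) →
      v / r ^ 2 - Real.cos φ ^ 2 / r ^ 3 > 1 / Real.sinh (a * r) ^ 2 := by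
  refine ⟨16 * (1 / a ^ 3 + 1 / a + 1), by positivity, ?_⟩
  intro r hr φ v hv
  have hr0 : 0 < r := lt_of_lt_of_le (by positivity) hr
  have har : 0 < a * r := mul_pos ha hr0
  have hs0 : 0 < Real.sinh (a * r) := Real.sinh_pos_iff.mpr har
  set s : ℝ := Real.sinh (a * r) with hs_def
  -- lower bound on sinh
  have hexp : (1 + a * r / 2) ^ 2 ≤ Real.exp (a * r) := by
    have h1 : Real.exp (a * r) = Real.exp (a * r / 2) ^ 2 := by
      rw [sq, ← Real.exp_add]; ring_nf
    rw [h1]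
    have h2 : 1 + a * r / 2 ≤ Real.exp (a * r / 2) := by
      have := Real.add_one_le_exp (a * r / 2); linarith
    exact pow_le_pow_left₀ (by positivity) h2 2
  have hsl : a ^ 2 * r ^ 2 / 8 ≤ s := by
    have hneg : Real.exp (-(a * r)) ≤ 1 := Real.exp_le_one_iff.mpr (by linarith)
    rw [hs_def, Real.sinh_eq]
    nlinarith [hexp, har.le]
  -- v ≥ a/2
  have hcoth : 1 ≤ Real.cosh (a * r) / s := by
    rw [le_div_iff₀ hs0]; nlinarith [Real.sinh_lt_cosh (a * r)]
  have ht0 : (0:ℝ) ≤ Real.cosh (a * r) / s := le_trans zero_le_one hcoth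
  have hv2 : a / 2 ≤ v := by
    refine le_trans ?_ hv
    nlinarith [mul_nonneg (sq_nonneg (Real.sin φ)) ht0, hcoth, ha.le]
  have hcos : Real.cos φ ^ 2 ≤ 1 := Real.cos_sq_le_one φ
  -- consequences of r ≥ B
  have ha3 : (0:ℝ) < a ^ 3 := pow_pos ha 3
  have hinv1 : (0:ℝ) < 1 / a := by positivity
  have hinv3 : (0:ℝ) < 1 / a ^ 3 := by positivity
  have h4 : 16 ≤ a * r := by
    have h1 : 16 / a ≤ r := by
      have e : 16 / a = 16 * (1 / a) := by ring
      linarith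
    have := mul_le_mul_of_nonneg_left h1 ha.le
    have e2 : a * (16 / a) = 16 := by field_simp
    linarith
  have hx : 16 + 16 * a ^ 2 + 16 * a ^ 3 ≤ a ^ 3 * r := by
    have := mul_le_mul_of_nonneg_left hr ha3.le
    have e : a ^ 3 * (16 * (1 / a ^ 3 + 1 / a + 1)) = 16 + 16 * a ^ 2 + 16 * a ^ 3 := by
      field_simp
    linarith
  -- key polynomial bound : a^5 r^2 > 256
  have hx2 : (16 + 16 * a ^ 2 + 16 * a ^ 3) ^ 2 ≤ a ^ 6 * r ^ 2 := by
    have e : a ^ 6 * r ^ 2 = (a ^ 3 * r) ^ 2 := by ring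
    rw [e]
    exact pow_le_pow_left₀ (by positivity) hx 2
  have h5 : 256 < a ^ 5 * r ^ 2 := by
    have key : a * 256 < a * (a ^ 5 * r ^ 2) := by
      nlinarith [hx2, sq_nonneg (4 * a - 1), pow_pos ha 3, pow_pos ha 4, pow_pos ha 5,
        pow_pos ha 6, sq_nonneg a]
    exact lt_of_mul_lt_mul_left key ha.le
  -- key: 4 r^2 < a s^2
  have hkey : 4 * r ^ 2 < a * s ^ 2 := by
    have h2 : a * (a ^ 2 * r ^ 2 / 8) ^ 2 ≤ a * s ^ 2 := by
      have : (a ^ 2 * r ^ 2 / 8) ^ 2 ≤ s ^ 2 := by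
        apply pow_le_pow_left₀ (by positivity) hsl
      nlinarith [this, ha.le]
    have e : a * (a ^ 2 * r ^ 2 / 8) ^ 2 = a ^ 5 * r ^ 4 / 64 := by ring
    have h5' : 256 * r ^ 2 < a ^ 5 * r ^ 2 * r ^ 2 :=
      mul_lt_mul_of_pos_right h5 (by positivity)
    linarith [h2, h5']
  have hstep : 1 / s ^ 2 < a / 4 / r ^ 2 := by
    rw [div_lt_div_iff₀ (by positivity) (by positivity)]
    linarith
  have hstep2 : a / 4 / r ^ 2 ≤ v / r ^ 2 - Real.cos φ ^ 2 / r ^ 3 := by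
    have h6 : Real.cos φ ^ 2 / r ^ 3 ≤ 1 / r ^ 3 := by gcongr
    have h7 : 1 / r ^ 3 ≤ a / 4 / r ^ 2 := by
      rw [div_le_div_iff₀ (by positivity) (by positivity)]
      linarith [mul_le_mul_of_nonneg_right h4 (sq_nonneg r), sq_nonneg r]
    have h8 : a / 2 / r ^ 2 ≤ v / r ^ 2 := by gcongr
    have h9 : a / 2 / r ^ 2 = a / 4 / r ^ 2 + a / 4 / r ^ 2 := by ring
    linarith
  linarith
end
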